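/- Let q, M be natural numbers, let (α_i)_{i=1}^{M} and (β_i)_{i=0}^{q} be real coefficients, and define h(z) = Σ_{i=1}^{M} (α_i/√(i!)) He_i(z) and ψ(z) = Σ_{i=0}^{q} (β_i/√(i!)) He_i(z). Let θ, w ∈ ℝ^d be unit vectors with ρ = θᵀw, and let x ∼ N(0, I_d). Then, with the convention β_j = 0 for j > q and α_i = 0 for i > M, E[h(θᵀx) · ψ'(wᵀx) · x] = Σ_{i≥1} [ i α_i β_i ρ^{i−1} θ + √((i+1)(i+2)) α_i β_{i+2} ρ^i w ]. -/

import Mathlib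

open MeasureTheory ProbabilityTheory
open scoped RealInnerProductSpace BigOperators

open Polynomial Filter Real
open scoped Nat ENNReal NNReal Topology

/-- The standard Gaussian measure `N(0, I_d)` on `ℝ^d` (as `EuclideanSpace ℝ (Fin d)`),
realized as the pushforward of the product of `d` standard Gaussians on `ℝ`. -/
noncomputable def stdGaussian (d : ℕ) : Measure (EuclideanSpace ℝ (Fin d)) :=
  Measure.map (⇑(EuclideanSpace.equiv (Fin d) ℝ).symm)
    (Measure.pi fun _ : Fin d => gaussianReal 0 1)

/-- The `i`-th probabilists' Hermite polynomial, as a real polynomial. -/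
noncomputable def Hp (i : ℕ) : Polynomial ℝ :=
  (Polynomial.hermite i).map (Int.castRingHom ℝ)

noncomputable section HermiteAux
local notation "γ" => gaussianReal 0 1
local notation "Γ" d => (Measure.pi fun _ : Fin d => gaussianReal 0 1)

noncomputable def lclin {d : ℕ} (a x : Fin d → ℝ) : ℝ := ∑ k, a k * x k





lemma poly_abs_bound (p : Polynomial ℝ) :
    ∃ C : ℝ, 0 ≤ C ∧ ∀ t : ℝ, |p.eval t| ≤ C * (1 + |t|) ^ p.natDegree := by
  refine ⟨∑ i ∈ Finset.range (p.natDegree + 1), |p.coeff i|,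
    Finset.sum_nonneg fun _ _ => abs_nonneg _, fun t => ?_⟩
  calc |p.eval t| = |∑ i ∈ Finset.range (p.natDegree + 1), p.coeff i * t ^ i| := by
        rw [Polynomial.eval_eq_sum_range]
    _ ≤ ∑ i ∈ Finset.range (p.natDegree + 1), |p.coeff i * t ^ i| :=
        Finset.abs_sum_le_sum_abs _ _
    _ ≤ ∑ i ∈ Finset.range (p.natDegree + 1), |p.coeff i| * (1 + |t|) ^ p.natDegree := by
        refine Finset.sum_le_sum fun i hi => ?_
        rw [abs_mul, abs_pow]
        have h1 : |t| ^ i ≤ (1 + |t|) ^ i :=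
          pow_le_pow_left₀ (abs_nonneg t) (by linarith [abs_nonneg t]) i
        have h2 : (1 + |t|) ^ i ≤ (1 + |t|) ^ p.natDegree :=
          pow_le_pow_right₀ (by linarith [abs_nonneg t]) (Nat.lt_succ_iff.mp (Finset.mem_range.mp hi))
        exact mul_le_mul_of_nonneg_left (h1.trans h2) (abs_nonneg _)
    _ = _ := by rw [← Finset.sum_mul]

lemma integrable_weight_volume (N : ℕ) :
    Integrable (fun t : ℝ => (1 + |t|) ^ N * Real.exp (-(1/2) * t ^ 2)) := by
  have : ∀ t : ℝ, (1 + |t|) ^ N * Real.exp (-(1/2) * t ^ 2)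
      = ∑ k ∈ Finset.range (N + 1), |t| ^ k * Real.exp (-(1/2) * t ^ 2) * (N.choose k) := by
    intro t
    rw [add_comm (1:ℝ) (|t|), add_pow, Finset.sum_mul]
    refine Finset.sum_congr rfl fun k hk => ?_
    ring
  simp_rw [this]
  apply integrable_finset_sum
  intro k hk
  apply Integrable.mul_const
  have h := (integrable_rpow_mul_exp_neg_mul_sq (by norm_num : (0:ℝ) < 1/2)
    (((by norm_num : (-1:ℝ) < 0)).trans_le (Nat.cast_nonneg k) : (-1:ℝ) < (k:ℝ))).abs
  refine h.congr (Eventually.of_forall fun t => ?_)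
  show |t ^ ((k:ℝ)) * Real.exp (-(1/2) * t ^ 2)| = |t| ^ k * Real.exp (-(1/2) * t ^ 2)
  rw [Real.rpow_natCast, abs_mul, abs_pow, abs_of_nonneg (Real.exp_pos _).le]

lemma gaussianPDFReal_zero_one (t : ℝ) :
    gaussianPDFReal 0 1 t = (Real.sqrt (2 * π))⁻¹ * Real.exp (-(1/2) * t ^ 2) := by
  rw [gaussianPDFReal]
  push_cast
  rw [mul_one, sub_zero, mul_one]
  ring_nf

lemma integrable_gaussian_iff (g : ℝ → ℝ) :
    Integrable g γ ↔ Integrable (fun t => gaussianPDFReal 0 1 t * g t) := by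
  rw [gaussianReal_of_var_ne_zero _ one_ne_zero, gaussianPDF_def]
  have hmeas : Measurable fun t => (gaussianPDFReal 0 1 t).toNNReal :=
    (measurable_gaussianPDFReal 0 1).real_toNNReal
  have : (fun x => ENNReal.ofReal (gaussianPDFReal 0 1 x))
      = fun x => ((gaussianPDFReal 0 1 x).toNNReal : ℝ≥0∞) := rfl
  rw [this, integrable_withDensity_iff_integrable_smul hmeas]
  constructor <;> intro h <;> refine h.congr (Eventually.of_forall fun t => ?_) <;>
    simp [NNReal.smul_def, Real.coe_toNNReal _ (gaussianPDFReal_nonneg 0 1 t)]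

lemma integral_gaussian_eq (g : ℝ → ℝ) :
    ∫ t, g t ∂γ = ∫ t, gaussianPDFReal 0 1 t * g t := by
  rw [gaussianReal_of_var_ne_zero _ one_ne_zero, gaussianPDF_def]
  have hmeas : Measurable fun t => (gaussianPDFReal 0 1 t).toNNReal :=
    (measurable_gaussianPDFReal 0 1).real_toNNReal
  have : (fun x => ENNReal.ofReal (gaussianPDFReal 0 1 x))
      = fun x => ((gaussianPDFReal 0 1 x).toNNReal : ℝ≥0∞) := rfl
  rw [this, integral_withDensity_eq_integral_smul hmeas]
  refine integral_congr_ae (Eventually.of_forall fun t => ?_)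
  simp [NNReal.smul_def, Real.coe_toNNReal _ (gaussianPDFReal_nonneg 0 1 t)]

lemma integrable_gauss_poly {g : ℝ → ℝ} (hg : Continuous g) {C : ℝ} {N : ℕ}
    (hb : ∀ t, |g t| ≤ C * (1 + |t|) ^ N) : Integrable g γ := by
  rw [integrable_gaussian_iff]
  refine Integrable.mono' (((integrable_weight_volume N).const_mul ((Real.sqrt (2 * π))⁻¹ * C))) 
    (((measurable_gaussianPDFReal 0 1).mul hg.measurable).aestronglyMeasurable)
    (Eventually.of_forall fun t => ?_)
  rw [Real.norm_eq_abs, abs_mul, gaussianPDFReal_zero_one,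
    abs_of_nonneg (by positivity : (0:ℝ) ≤ (Real.sqrt (2 * π))⁻¹ * Real.exp (-(1/2) * t ^ 2))]
  calc (Real.sqrt (2 * π))⁻¹ * Real.exp (-(1/2) * t ^ 2) * |g t|
      ≤ (Real.sqrt (2 * π))⁻¹ * Real.exp (-(1/2) * t ^ 2) * (C * (1 + |t|) ^ N) := by
        refine mul_le_mul_of_nonneg_left (hb t) (by positivity)
    _ = (Real.sqrt (2 * π))⁻¹ * C * ((1 + |t|) ^ N * Real.exp (-(1/2) * t ^ 2)) := by ring

lemma integrable_polyeval (p : Polynomial ℝ) : Integrable (fun t => p.eval t) γ := by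
  obtain ⟨C, hC, hb⟩ := poly_abs_bound p
  exact integrable_gauss_poly (p.continuous) hb




lemma tendsto_polyGauss_atTop (p : Polynomial ℝ) :
    Tendsto (fun t : ℝ => p.eval t * Real.exp (-(1/2) * t ^ 2)) atTop (𝓝 0) := by
  obtain ⟨C, hC, hb⟩ := poly_abs_bound p
  have hexp : Tendsto (fun x : ℝ => Real.exp (-(1/2) * x)) atTop (𝓝 0) := by
    have hlin : Tendsto (fun x : ℝ => -(1/2) * x) atTop atBot := by
      have h := tendsto_neg_atTop_atBot.comp
        (tendsto_id.const_mul_atTop (by norm_num : (0:ℝ) < 1/2))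
      exact h.congr fun x => by simp [Function.comp]
    exact Real.tendsto_exp_atBot.comp hlin
  have h1 : Tendsto (fun t : ℝ => t ^ ((p.natDegree : ℝ)) * Real.exp (-(1/2) * t ^ 2))
      atTop (𝓝 0) :=
    (rpow_mul_exp_neg_mul_sq_isLittleO_exp_neg (by norm_num) _).tendsto_zero_of_tendsto hexp
  have h2 : Tendsto (fun t : ℝ => (C * 2 ^ p.natDegree) *
      (t ^ ((p.natDegree : ℝ)) * Real.exp (-(1/2) * t ^ 2))) atTop (𝓝 0) := by
    simpa using h1.const_mul (C * 2 ^ p.natDegree)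
  refine squeeze_zero_norm' ?_ h2
  filter_upwards [eventually_ge_atTop (1:ℝ)] with t ht
  have h0 : (0:ℝ) ≤ t := by linarith
  rw [norm_mul, Real.norm_eq_abs, Real.norm_eq_abs, abs_of_nonneg (Real.exp_pos _).le,
    Real.rpow_natCast]
  have hbd : |p.eval t| ≤ (C * 2 ^ p.natDegree) * t ^ p.natDegree := by
    refine (hb t).trans ?_
    rw [mul_assoc]
    refine mul_le_mul_of_nonneg_left ?_ hC
    rw [← mul_pow]
    refine pow_le_pow_left₀ (by positivity) ?_ _
    rw [abs_of_nonneg h0]; linarith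
  calc |p.eval t| * Real.exp (-(1/2) * t ^ 2)
      ≤ ((C * 2 ^ p.natDegree) * t ^ p.natDegree) * Real.exp (-(1/2) * t ^ 2) :=
        mul_le_mul_of_nonneg_right hbd (Real.exp_pos _).le
    _ = (C * 2 ^ p.natDegree) * (t ^ p.natDegree * Real.exp (-(1/2) * t ^ 2)) := by ring

lemma tendsto_polyGauss_atBot (p : Polynomial ℝ) :
    Tendsto (fun t : ℝ => p.eval t * Real.exp (-(1/2) * t ^ 2)) atBot (𝓝 0) := by
  have h := (tendsto_polyGauss_atTop (p.comp (-X))).comp tendsto_neg_atBot_atTop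
  refine h.congr fun t => ?_
  simp [Function.comp, Polynomial.eval_comp, neg_sq]

lemma stein_poly (p : Polynomial ℝ) :
    ∫ t, t * p.eval t ∂γ = ∫ t, (derivative p).eval t ∂γ := by
  have intX : Integrable (fun t => t * p.eval t) γ := by
    have := integrable_polyeval (X * p); simpa using this
  have intD : Integrable (fun t => (derivative p).eval t) γ := integrable_polyeval _
  rw [← sub_eq_zero, integral_gaussian_eq, integral_gaussian_eq,
    ← integral_sub ((integrable_gaussian_iff _).mp intX) ((integrable_gaussian_iff _).mp intD)]
  have hder : ∀ t : ℝ, HasDerivAt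
      (fun t => -((Real.sqrt (2 * π))⁻¹ * (p.eval t * Real.exp (-(1/2) * t ^ 2))))
      (gaussianPDFReal 0 1 t * (t * p.eval t) - gaussianPDFReal 0 1 t * (derivative p).eval t)
      t := by
    intro t
    have h1 : HasDerivAt (fun t : ℝ => Real.exp (-(1/2) * t ^ 2))
        (Real.exp (-(1/2) * t ^ 2) * (-(1/2) * (2 * t ^ 1))) t := by
      exact HasDerivAt.exp ((hasDerivAt_pow 2 t).const_mul (-(1/2)))
    have h2 : HasDerivAt (fun t : ℝ => p.eval t) ((derivative p).eval t) t := p.hasDerivAt t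
    have h3 := ((h2.mul h1).const_mul ((Real.sqrt (2 * π))⁻¹)).neg
    refine h3.congr_deriv ?_
    rw [gaussianPDFReal_zero_one]
    ring
  have hint : Integrable (fun t => gaussianPDFReal 0 1 t * (t * p.eval t)
      - gaussianPDFReal 0 1 t * (derivative p).eval t) :=
    ((integrable_gaussian_iff _).mp intX).sub ((integrable_gaussian_iff _).mp intD)
  have htop : Tendsto (fun t : ℝ =>
      -((Real.sqrt (2 * π))⁻¹ * (p.eval t * Real.exp (-(1/2) * t ^ 2)))) atTop (𝓝 0) := by
    simpa using ((tendsto_polyGauss_atTop p).const_mul ((Real.sqrt (2 * π))⁻¹)).neg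
  have hbot : Tendsto (fun t : ℝ =>
      -((Real.sqrt (2 * π))⁻¹ * (p.eval t * Real.exp (-(1/2) * t ^ 2)))) atBot (𝓝 0) := by
    simpa using ((tendsto_polyGauss_atBot p).const_mul ((Real.sqrt (2 * π))⁻¹)).neg
  have hIoi := integral_Ioi_of_hasDerivAt_of_tendsto' (a := 0)
    (fun x _ => hder x) hint.integrableOn htop
  have hIic := integral_Iic_of_hasDerivAt_of_tendsto' (a := 0)
    (fun x _ => hder x) hint.integrableOn hbot
  rw [← intervalIntegral.integral_Iic_add_Ioi (b := (0:ℝ)) hint.integrableOn hint.integrableOn, hIoi, hIic]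
  ring

lemma integrable_affine2 (P Q : Polynomial ℝ) (a b r s : ℝ) :
    Integrable (fun t => P.eval (a*t + r) * Q.eval (b*t + s)) γ := by
  have := integrable_polyeval ((P.comp (C a * X + C r)) * (Q.comp (C b * X + C s)))
  refine this.congr (Eventually.of_forall fun t => ?_)
  simp [eval_comp]

lemma stein_affine (P Q : Polynomial ℝ) (a b r s : ℝ) :
    ∫ t, t * (P.eval (a*t + r) * Q.eval (b*t + s)) ∂γ
      = a * ∫ t, (derivative P).eval (a*t + r) * Q.eval (b*t + s) ∂γ
      + b * ∫ t, P.eval (a*t + r) * (derivative Q).eval (b*t + s) ∂γ := by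
  have e1 : ∀ t : ℝ, ((P.comp (C a * X + C r)) * (Q.comp (C b * X + C s))).eval t
      = P.eval (a*t + r) * Q.eval (b*t + s) := by intro t; simp [eval_comp]
  have e2 : ∀ t : ℝ, (derivative ((P.comp (C a * X + C r)) * (Q.comp (C b * X + C s)))).eval t
      = a * ((derivative P).eval (a*t + r) * Q.eval (b*t + s))
        + b * (P.eval (a*t + r) * (derivative Q).eval (b*t + s)) := by
    intro t
    simp [derivative_mul, derivative_comp, eval_comp]
    ring
  calc ∫ t, t * (P.eval (a*t + r) * Q.eval (b*t + s)) ∂γ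
      = ∫ t, t * ((P.comp (C a * X + C r)) * (Q.comp (C b * X + C s))).eval t ∂γ := by
        simp_rw [e1]
    _ = ∫ t, (derivative ((P.comp (C a * X + C r)) * (Q.comp (C b * X + C s)))).eval t ∂γ :=
        stein_poly _
    _ = ∫ t, (a * ((derivative P).eval (a*t + r) * Q.eval (b*t + s))
        + b * (P.eval (a*t + r) * (derivative Q).eval (b*t + s))) ∂γ := by simp_rw [e2]
    _ = _ := by
        rw [integral_add ((integrable_affine2 (derivative P) Q a b r s).const_mul a)
          ((integrable_affine2 P (derivative Q) a b r s).const_mul b),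
          integral_const_mul, integral_const_mul]




/-- the linear form `x ↦ ∑ k, a k * x k` -/


lemma lclin_single {d : ℕ} (j : Fin d) (x : Fin d → ℝ) :
    lclin (Pi.single j 1) x = x j := by
  rw [lclin]
  rw [Finset.sum_eq_single j]
  · simp
  · intro k _ hk; simp [Pi.single_apply, hk]
  · simp

lemma continuous_lclin {d : ℕ} (a : Fin d → ℝ) : Continuous fun x : Fin d → ℝ => lclin a x := by
  unfold lclin
  exact continuous_finset_sum _ fun k _ => continuous_const.mul (continuous_apply k)

lemma integrable_pi_prod {n : ℕ} (f : ℝ → ℝ) (hf : Integrable f γ) :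
    Integrable (fun x : Fin n → ℝ => ∏ k, f (x k)) (Γ n) := by
  induction n with
  | zero => simpa using (integrable_const (c := (1:ℝ)) (μ := Γ 0))
  | succ n ih =>
      have hmp := (measurePreserving_piFinSuccAbove (fun _ : Fin (n+1) => γ) 0).symm
      rw [← hmp.integrable_comp_emb (MeasurableEquiv.measurableEmbedding _)]
      simp_rw [MeasurableEquiv.piFinSuccAbove_symm_apply, Fin.insertNthEquiv,
        Fin.prod_univ_succ, Fin.insertNth_zero]
      simp only [Fin.zero_succAbove, Function.comp_def, Fin.cons_zero, Fin.cons_succ,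
        Equiv.coe_fn_mk]
      exact Integrable.mul_prod hf ih

lemma one_le_prod_real {ι : Type*} (s : Finset ι) (f : ι → ℝ) (h : ∀ i ∈ s, 1 ≤ f i) :
    (1:ℝ) ≤ ∏ i ∈ s, f i := by
  calc (1:ℝ) = ∏ _i ∈ s, 1 := (Finset.prod_const_one).symm
    _ ≤ ∏ i ∈ s, f i := Finset.prod_le_prod (fun i _ => zero_le_one) h

lemma one_le_prod_one_add_abs {d : ℕ} (x : Fin d → ℝ) : (1:ℝ) ≤ ∏ k, (1 + |x k|) :=
  one_le_prod_real _ _ fun k _ => by linarith [abs_nonneg (x k)]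

lemma poly_lclin_bound {d : ℕ} (p : Polynomial ℝ) (a : Fin d → ℝ) :
    ∃ C : ℝ, 0 ≤ C ∧ ∀ x : Fin d → ℝ,
      |p.eval (lclin a x)| ≤ C * ∏ k, (1 + |x k|) ^ p.natDegree := by
  obtain ⟨C, hC, hb⟩ := poly_abs_bound p
  refine ⟨C * (1 + ∑ k, |a k|) ^ p.natDegree, by positivity, fun x => ?_⟩
  have key : 1 + |lclin a x| ≤ (1 + ∑ k, |a k|) * ∏ k, (1 + |x k|) := by
    have hP : ∀ k, |x k| ≤ ∏ j, (1 + |x j|) := by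
      intro k
      have h1 : |x k| ≤ 1 + |x k| := by linarith [abs_nonneg (x k)]
      refine h1.trans ?_
      have he := Finset.mul_prod_erase Finset.univ (fun j => 1 + |x j|) (Finset.mem_univ k)
      have h2 : (1:ℝ) ≤ ∏ j ∈ Finset.univ.erase k, (1 + |x j|) :=
        one_le_prod_real _ _ fun j _ => by linarith [abs_nonneg (x j)]
      calc 1 + |x k| = (1 + |x k|) * 1 := (mul_one _).symm
        _ ≤ (1 + |x k|) * ∏ j ∈ Finset.univ.erase k, (1 + |x j|) :=
            mul_le_mul_of_nonneg_left h2 (by linarith [abs_nonneg (x k)])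
        _ = ∏ j, (1 + |x j|) := he
    have h1 : |lclin a x| ≤ (∑ k, |a k|) * ∏ j, (1 + |x j|) := by
      refine le_trans (Finset.abs_sum_le_sum_abs _ _) ?_
      rw [Finset.sum_mul]
      refine Finset.sum_le_sum fun k _ => ?_
      rw [abs_mul]
      exact mul_le_mul_of_nonneg_left (hP k) (abs_nonneg _)
    have h2 := one_le_prod_one_add_abs x
    have h3 : (0:ℝ) ≤ ∑ k, |a k| := Finset.sum_nonneg fun _ _ => abs_nonneg _
    nlinarith
  calc |p.eval (lclin a x)| ≤ C * (1 + |lclin a x|) ^ p.natDegree := hb _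
    _ ≤ C * ((1 + ∑ k, |a k|) * ∏ k, (1 + |x k|)) ^ p.natDegree := by
        refine mul_le_mul_of_nonneg_left (pow_le_pow_left₀ (by positivity) key _) hC
    _ = C * (1 + ∑ k, |a k|) ^ p.natDegree * ∏ k, ((1 + |x k|) ^ p.natDegree) := by
        rw [mul_pow, ← Finset.prod_pow]; ring
    _ = _ := by rw [Finset.prod_pow]

lemma integrable_three {d : ℕ} (p q r : Polynomial ℝ) (a b c : Fin d → ℝ) :
    Integrable (fun x : Fin d → ℝ =>
      p.eval (lclin a x) * q.eval (lclin b x) * r.eval (lclin c x)) (Γ d) := by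
  obtain ⟨Ca, hCa, hba⟩ := poly_lclin_bound p a
  obtain ⟨Cb, hCb, hbb⟩ := poly_lclin_bound q b
  obtain ⟨Cc, hCc, hbc⟩ := poly_lclin_bound r c
  set N := p.natDegree + q.natDegree + r.natDegree with hN
  have hbound : Integrable (fun x : Fin d → ℝ =>
      (Ca * Cb * Cc) * ∏ k, (1 + |x k|) ^ N) (Γ d) := by
    refine Integrable.const_mul ?_ _
    exact integrable_pi_prod (fun t => (1 + |t|) ^ N)
      (integrable_gauss_poly ((continuous_const.add continuous_abs).pow N)
        (C := 1) (fun t => by rw [one_mul, abs_of_nonneg (by positivity)]))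
  refine Integrable.mono' hbound ?_ (Eventually.of_forall fun x => ?_)
  · exact (((p.continuous.comp (continuous_lclin a)).mul
      (q.continuous.comp (continuous_lclin b))).mul
      (r.continuous.comp (continuous_lclin c))).aestronglyMeasurable
  · rw [Real.norm_eq_abs, abs_mul, abs_mul]
    calc |p.eval (lclin a x)| * |q.eval (lclin b x)| * |r.eval (lclin c x)|
        ≤ (Ca * ∏ k, (1 + |x k|) ^ p.natDegree) * (Cb * ∏ k, (1 + |x k|) ^ q.natDegree)
          * (Cc * ∏ k, (1 + |x k|) ^ r.natDegree) := by
          refine mul_le_mul (mul_le_mul (hba x) (hbb x) (abs_nonneg _) ?_) (hbc x)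
            (abs_nonneg _) ?_ <;> positivity
      _ = (Ca * Cb * Cc) * ∏ k, (1 + |x k|) ^ N := by
          rw [hN]
          have hsplit : (∏ k, (1 + |x k|) ^ (p.natDegree + q.natDegree + r.natDegree))
              = (∏ k, (1 + |x k|) ^ p.natDegree) * (∏ k, (1 + |x k|) ^ q.natDegree)
                * (∏ k, (1 + |x k|) ^ r.natDegree) := by
            rw [← Finset.prod_mul_distrib, ← Finset.prod_mul_distrib]
            exact Finset.prod_congr rfl fun k _ => by rw [← pow_add, ← pow_add]
          rw [hsplit]
          ring






lemma stein_coord {d : ℕ} (p q : Polynomial ℝ) (a b : Fin d → ℝ) (j : Fin d) :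
    ∫ x, x j * (p.eval (lclin a x) * q.eval (lclin b x)) ∂(Γ d)
      = a j * ∫ x, (derivative p).eval (lclin a x) * q.eval (lclin b x) ∂(Γ d)
      + b j * ∫ x, p.eval (lclin a x) * (derivative q).eval (lclin b x) ∂(Γ d) := by
  cases d with
  | zero => exact j.elim0
  | succ n =>
    have MPsymm := (measurePreserving_piFinSuccAbove (fun _ : Fin (n+1) => γ) j).symm
    set e := MeasurableEquiv.piFinSuccAbove (fun _ : Fin (n+1) => ℝ) j with he
    set a' : Fin n → ℝ := a ∘ j.succAbove with ha'
    set b' : Fin n → ℝ := b ∘ j.succAbove with hb'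
    have hesymm : ∀ z : ℝ × (Fin n → ℝ), e.symm z = j.insertNth z.1 z.2 := by
      intro z
      simp [he, MeasurableEquiv.piFinSuccAbove_symm_apply, Fin.insertNthEquiv]
    have hlin : ∀ (c : Fin (n+1) → ℝ) (t : ℝ) (y : Fin n → ℝ),
        lclin c (j.insertNth t y) = c j * t + lclin (c ∘ j.succAbove) y := by
      intro c t y
      rw [lclin, Fin.sum_univ_succAbove _ j]
      simp [lclin, Function.comp]
    have hPQprod : ∀ P Q : Polynomial ℝ, Integrable (fun z : ℝ × (Fin n → ℝ) =>
        P.eval (a j * z.1 + lclin a' z.2) * Q.eval (b j * z.1 + lclin b' z.2))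
        (Measure.prod γ (Γ n)) := by
      intro P Q
      have h1 : Integrable (fun x : Fin (n+1) → ℝ =>
          P.eval (lclin a x) * Q.eval (lclin b x)) (Γ (n+1)) := by
        have h := integrable_three P Q 1 a b 0
        refine h.congr (Eventually.of_forall fun x => ?_)
        simp
      have h2 := (MPsymm.integrable_comp_emb e.symm.measurableEmbedding).mpr h1
      refine h2.congr (Eventually.of_forall fun z => ?_)
      simp [Function.comp_def, hesymm, hlin, ha', hb']
    have hXprod : Integrable (fun z : ℝ × (Fin n → ℝ) =>
        z.1 * (p.eval (a j * z.1 + lclin a' z.2) * q.eval (b j * z.1 + lclin b' z.2)))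
        (Measure.prod γ (Γ n)) := by
      have h1 : Integrable (fun x : Fin (n+1) → ℝ =>
          x j * (p.eval (lclin a x) * q.eval (lclin b x))) (Γ (n+1)) := by
        have h := integrable_three p q X a b (Pi.single j 1)
        refine h.congr (Eventually.of_forall fun x => ?_)
        simp only [eval_X, lclin_single]
        ring
      have h2 := (MPsymm.integrable_comp_emb e.symm.measurableEmbedding).mpr h1
      refine h2.congr (Eventually.of_forall fun z => ?_)
      simp [Function.comp_def, hesymm, hlin, Fin.insertNth_apply_same, ha', hb']
    have hPQint : ∀ P Q : Polynomial ℝ,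
        ∫ x, P.eval (lclin a x) * Q.eval (lclin b x) ∂(Γ (n+1))
        = ∫ y, (∫ t, P.eval (a j * t + lclin a' y) * Q.eval (b j * t + lclin b' y) ∂γ)
            ∂(Γ n) := by
      intro P Q
      rw [← MPsymm.integral_comp' (fun x => P.eval (lclin a x) * Q.eval (lclin b x))]
      simp_rw [hesymm, hlin]
      exact integral_prod_symm _ (hPQprod P Q)
    have hXint :
        ∫ x, x j * (p.eval (lclin a x) * q.eval (lclin b x)) ∂(Γ (n+1))
        = ∫ y, (∫ t, t * (p.eval (a j * t + lclin a' y) * q.eval (b j * t + lclin b' y)) ∂γ)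
            ∂(Γ n) := by
      rw [← MPsymm.integral_comp' (fun x => x j * (p.eval (lclin a x) * q.eval (lclin b x)))]
      simp_rw [hesymm, hlin, Fin.insertNth_apply_same]
      exact integral_prod_symm _ hXprod
    rw [hXint]
    have hin : ∀ y : Fin n → ℝ,
        (∫ t, t * (p.eval (a j * t + lclin a' y) * q.eval (b j * t + lclin b' y)) ∂γ)
        = a j * ∫ t, (derivative p).eval (a j * t + lclin a' y)
              * q.eval (b j * t + lclin b' y) ∂γ
          + b j * ∫ t, p.eval (a j * t + lclin a' y)
              * (derivative q).eval (b j * t + lclin b' y) ∂γ :=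
      fun y => stein_affine p q (a j) (b j) (lclin a' y) (lclin b' y)
    rw [integral_congr_ae (Eventually.of_forall hin)]
    rw [integral_add (((hPQprod (derivative p) q).integral_prod_right).const_mul (a j))
      (((hPQprod p (derivative q)).integral_prod_right).const_mul (b j)),
      integral_const_mul, integral_const_mul, ← hPQint (derivative p) q, ← hPQint p (derivative q)]






lemma Hp_zero : Hp 0 = 1 := by simp [Hp, Polynomial.hermite_zero]

lemma Hp_succ (n : ℕ) : Hp (n + 1) = X * Hp n - derivative (Hp n) := by
  rw [Hp, Polynomial.hermite_succ, Polynomial.map_sub, Polynomial.map_mul, Polynomial.map_X,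
    ← Polynomial.derivative_map]
  rfl

lemma Hp_deriv : ∀ n : ℕ, derivative (Hp n) = C (n : ℝ) * Hp (n - 1) := by
  intro n
  induction n using Nat.strong_induction_on with
  | _ n ih =>
    match n with
    | 0 => simp [Hp_zero]
    | 1 => simp [Hp_succ 0, Hp_zero]
    | (m+2) =>
      have ih1 := ih (m+1) (by omega)
      have ih0 := ih m (by omega)
      have h11 : m + 1 - 1 = m := rfl
      have h21 : m + 2 - 1 = m + 1 := rfl
      rw [h11] at ih1
      rw [Hp_succ (m+1), derivative_sub, derivative_mul, derivative_X, ih1,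
        derivative_C_mul, ih0, h21, Hp_succ m, ih0]
      simp only [Nat.cast_add, Nat.cast_one, Nat.cast_ofNat, C_add, C_1, map_ofNat,
        Polynomial.C_eq_natCast]
      ring

lemma integrable_coord {d : ℕ} (p q : Polynomial ℝ) (a b : Fin d → ℝ) (k : Fin d) :
    Integrable (fun x => x k * (p.eval (lclin a x) * q.eval (lclin b x))) (Γ d) := by
  have h := integrable_three p q X a b (Pi.single k 1)
  refine h.congr (Eventually.of_forall fun x => ?_)
  simp only [eval_X, lclin_single]
  ring

lemma integrable_pq {d : ℕ} (p q : Polynomial ℝ) (a b : Fin d → ℝ) :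
    Integrable (fun x => p.eval (lclin a x) * q.eval (lclin b x)) (Γ d) := by
  have h := integrable_three p q 1 a b 0
  refine h.congr (Eventually.of_forall fun x => ?_)
  simp

lemma stein_dir {d : ℕ} (p q : Polynomial ℝ) (a b c : Fin d → ℝ) :
    ∫ x, lclin c x * (p.eval (lclin a x) * q.eval (lclin b x)) ∂(Γ d)
      = lclin c a * ∫ x, (derivative p).eval (lclin a x) * q.eval (lclin b x) ∂(Γ d)
      + lclin c b * ∫ x, p.eval (lclin a x) * (derivative q).eval (lclin b x) ∂(Γ d) := by
  have expand : ∀ x : Fin d → ℝ, lclin c x * (p.eval (lclin a x) * q.eval (lclin b x))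
      = ∑ k, c k * (x k * (p.eval (lclin a x) * q.eval (lclin b x))) := by
    intro x
    rw [lclin, Finset.sum_mul]
    exact Finset.sum_congr rfl fun k _ => by ring
  simp_rw [expand]
  rw [integral_finset_sum _ (fun k _ => (integrable_coord p q a b k).const_mul (c k))]
  simp_rw [integral_const_mul, stein_coord p q a b, mul_add, ← mul_assoc]
  rw [Finset.sum_add_distrib, ← Finset.sum_mul, ← Finset.sum_mul]
  rfl

section Orth
variable {d : ℕ} (a b : Fin d → ℝ)

lemma A_rec (ha : lclin a a = 1) (m n : ℕ) :
    ∫ x, (Hp (m+1)).eval (lclin a x) * (Hp n).eval (lclin b x) ∂(Γ d)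
    = lclin a b * ((n : ℝ) *
        ∫ x, (Hp m).eval (lclin a x) * (Hp (n-1)).eval (lclin b x) ∂(Γ d)) := by
  have e1 : ∀ x : Fin d → ℝ, (Hp (m+1)).eval (lclin a x) * (Hp n).eval (lclin b x)
      = lclin a x * ((Hp m).eval (lclin a x) * (Hp n).eval (lclin b x))
        - (m : ℝ) * ((Hp (m-1)).eval (lclin a x) * (Hp n).eval (lclin b x)) := by
    intro x
    rw [Hp_succ m, eval_sub, eval_mul, eval_X, Hp_deriv m, eval_mul, eval_C]
    ring
  simp_rw [e1]
  have hint1 : Integrable (fun x =>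
      lclin a x * ((Hp m).eval (lclin a x) * (Hp n).eval (lclin b x))) (Γ d) := by
    have expand : ∀ x : Fin d → ℝ,
        lclin a x * ((Hp m).eval (lclin a x) * (Hp n).eval (lclin b x))
        = ∑ k, a k * (x k * ((Hp m).eval (lclin a x) * (Hp n).eval (lclin b x))) := by
      intro x
      rw [lclin, Finset.sum_mul]
      exact Finset.sum_congr rfl fun k _ => by ring
    simp_rw [expand]
    exact integrable_finset_sum _ fun k _ => (integrable_coord _ _ a b k).const_mul (a k)
  have hint2 : Integrable (fun x =>
      (m : ℝ) * ((Hp (m-1)).eval (lclin a x) * (Hp n).eval (lclin b x))) (Γ d) :=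
    (integrable_pq _ _ a b).const_mul _
  rw [integral_sub hint1 hint2, stein_dir (Hp m) (Hp n) a b a, ha, one_mul]
  simp_rw [Hp_deriv, eval_mul, eval_C]
  have em : ∀ x : Fin d → ℝ, ((m:ℝ) * (Hp (m-1)).eval (lclin a x)) * (Hp n).eval (lclin b x)
      = (m:ℝ) * ((Hp (m-1)).eval (lclin a x) * (Hp n).eval (lclin b x)) := fun x => by ring
  have en : ∀ x : Fin d → ℝ, (Hp m).eval (lclin a x) * ((n:ℝ) * (Hp (n-1)).eval (lclin b x))
      = (n:ℝ) * ((Hp m).eval (lclin a x) * (Hp (n-1)).eval (lclin b x)) := fun x => by ring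
  simp_rw [em, en, integral_const_mul]
  ring

lemma A_zero (hb : lclin b b = 1) :
    ∀ n : ℕ, ∫ x, (Hp 0).eval (lclin a x) * (Hp n).eval (lclin b x) ∂(Γ d)
      = if 0 = n then 1 else 0 := by
  intro n
  cases n with
  | zero =>
      simp only [if_pos rfl, Hp_zero, eval_one, one_mul]
      simp
  | succ n =>
      simp only [Nat.succ_ne_zero, if_neg (by omega : ¬ (0 = n+1))]
      have e1 : ∀ x : Fin d → ℝ, (Hp 0).eval (lclin a x) * (Hp (n+1)).eval (lclin b x)
          = lclin b x * ((Hp 0).eval (lclin a x) * (Hp n).eval (lclin b x))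
            - (n : ℝ) * ((Hp 0).eval (lclin a x) * (Hp (n-1)).eval (lclin b x)) := by
        intro x
        rw [Hp_succ n, eval_sub, eval_mul, eval_X, Hp_deriv n, eval_mul, eval_C, Hp_zero]
        simp
      simp_rw [e1]
      have hint1 : Integrable (fun x =>
          lclin b x * ((Hp 0).eval (lclin a x) * (Hp n).eval (lclin b x))) (Γ d) := by
        have expand : ∀ x : Fin d → ℝ,
            lclin b x * ((Hp 0).eval (lclin a x) * (Hp n).eval (lclin b x))
            = ∑ k, b k * (x k * ((Hp 0).eval (lclin a x) * (Hp n).eval (lclin b x))) := by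
          intro x
          rw [lclin, Finset.sum_mul]
          exact Finset.sum_congr rfl fun k _ => by ring
        simp_rw [expand]
        exact integrable_finset_sum _ fun k _ => (integrable_coord _ _ a b k).const_mul (b k)
      have hint2 : Integrable (fun x =>
          (n : ℝ) * ((Hp 0).eval (lclin a x) * (Hp (n-1)).eval (lclin b x))) (Γ d) :=
        (integrable_pq _ _ a b).const_mul _
      rw [integral_sub hint1 hint2, stein_dir (Hp 0) (Hp n) a b b, hb, one_mul]
      have hd0 : derivative (Hp 0) = 0 := by rw [Hp_zero]; simp
      rw [hd0]
      have en : ∀ x : Fin d → ℝ, (Hp 0).eval (lclin a x)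
            * ((derivative (Hp n)).eval (lclin b x))
          = (n:ℝ) * ((Hp 0).eval (lclin a x) * (Hp (n-1)).eval (lclin b x)) := by
        intro x
        rw [Hp_deriv n, eval_mul, eval_C]
        ring
      simp_rw [en, eval_zero, zero_mul, integral_zero, mul_zero, zero_add, integral_const_mul]
      ring

lemma hermite_orth (ha : lclin a a = 1) (hb : lclin b b = 1) :
    ∀ m n : ℕ, ∫ x, (Hp m).eval (lclin a x) * (Hp n).eval (lclin b x) ∂(Γ d)
      = if m = n then (m ! : ℝ) * (lclin a b) ^ m else 0 := by
  intro m
  induction m with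
  | zero =>
      intro n
      rw [A_zero a b hb n]
      by_cases h : 0 = n
      · rw [if_pos h, if_pos h]
        simp
      · rw [if_neg h, if_neg h]
  | succ m ih =>
      intro n
      rw [A_rec a b ha m n]
      cases n with
      | zero => simp
      | succ k =>
          rw [Nat.succ_sub_one, ih k]
          by_cases hmk : m = k
          · subst hmk
            rw [if_pos rfl, if_pos rfl, Nat.factorial_succ]
            push_cast
            ring
          · rw [if_neg hmk, if_neg (by omega)]
            ring

lemma hermite_coord (ha : lclin a a = 1) (hb : lclin b b = 1) (m n : ℕ) (j : Fin d) :
    ∫ x, x j * ((Hp m).eval (lclin a x) * (Hp n).eval (lclin b x)) ∂(Γ d)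
      = a j * ((m : ℝ) * (if m - 1 = n then ((m-1)! : ℝ) * (lclin a b) ^ (m-1) else 0))
        + b j * ((n : ℝ) * (if m = n - 1 then (m ! : ℝ) * (lclin a b) ^ m else 0)) := by
  rw [stein_coord (Hp m) (Hp n) a b j]
  simp_rw [Hp_deriv, eval_mul, eval_C]
  have em : ∀ x : Fin d → ℝ, ((m:ℝ) * (Hp (m-1)).eval (lclin a x)) * (Hp n).eval (lclin b x)
      = (m:ℝ) * ((Hp (m-1)).eval (lclin a x) * (Hp n).eval (lclin b x)) := fun x => by ring
  have en : ∀ x : Fin d → ℝ, (Hp m).eval (lclin a x) * ((n:ℝ) * (Hp (n-1)).eval (lclin b x))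
      = (n:ℝ) * ((Hp m).eval (lclin a x) * (Hp (n-1)).eval (lclin b x)) := fun x => by ring
  simp_rw [em, en, integral_const_mul]
  rw [hermite_orth a b ha hb, hermite_orth a b ha hb]

end Orth


end HermiteAux

noncomputable section MainThm
local notation "γ" => gaussianReal 0 1
local notation "Γ" d => (Measure.pi fun _ : Fin d => gaussianReal 0 1)




/-- With `h(z) = Σ_{i=1}^M (α_i/√i!) He_i(z)`,
`ψ(z) = Σ_{i=0}^q (β_i/√i!) He_i(z)`, unit vectors `θ, w` with `ρ = θᵀw`, and
`x ∼ N(0, I_d)` (with the convention `β_j = 0` for `j > q`),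
`E[h(θᵀx) ψ'(wᵀx) x] = Σ_{i≥1} [i α_i β_i ρ^(i-1) θ + √((i+1)(i+2)) α_i β_{i+2} ρ^i w]`. -/
theorem hermite_population_gradient (d q M : ℕ) (α β : ℕ → ℝ)
    (hβ : ∀ j, q < j → β j = 0)
    (θ w : EuclideanSpace ℝ (Fin d)) (hθ : ‖θ‖ = 1) (hw : ‖w‖ = 1) :
    (∫ x, ((∑ i ∈ Finset.Icc 1 M,
            (α i / Real.sqrt (Nat.factorial i)) * (Hp i).eval ⟪θ, x⟫)
          * (Polynomial.derivative (∑ i ∈ Finset.range (q + 1),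
              Polynomial.C (β i / Real.sqrt (Nat.factorial i)) * Hp i)).eval ⟪w, x⟫) • x
        ∂(stdGaussian d))
      = ∑ i ∈ Finset.Icc 1 M,
          (((i : ℝ) * α i * β i * ⟪θ, w⟫ ^ (i - 1)) • θ
            + (Real.sqrt (((i : ℝ) + 1) * ((i : ℝ) + 2)) * α i * β (i + 2) * ⟪θ, w⟫ ^ i) • w) := by
  classical
  -- inner products as linear forms over the pi space
  have hinner : ∀ (v : EuclideanSpace ℝ (Fin d)) (x : Fin d → ℝ),
      ⟪v, ((EuclideanSpace.equiv (Fin d) ℝ).symm x)⟫ = lclin (fun k => v k) x := by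
    intro v x
    rw [PiLp.inner_apply, lclin]
    simp [RCLike.inner_apply]
    exact Finset.sum_congr rfl fun _ _ => mul_comm _ _
  have hinner2 : ∀ u v : EuclideanSpace ℝ (Fin d),
      ⟪u, v⟫ = lclin (fun k => u k) (fun k => v k) := by
    intro u v
    rw [PiLp.inner_apply, lclin]
    simp [RCLike.inner_apply]
    exact Finset.sum_congr rfl fun _ _ => mul_comm _ _
  have haa : lclin (fun k => θ k) (fun k => θ k) = 1 := by
    rw [← hinner2, real_inner_self_eq_norm_mul_norm, hθ]; norm_num
  have hbb : lclin (fun k => w k) (fun k => w k) = 1 := by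
    rw [← hinner2, real_inner_self_eq_norm_mul_norm, hw]; norm_num
  set ρ : ℝ := lclin (fun k => θ k) (fun k => w k) with hρ
  have hρw : ⟪θ, w⟫ = ρ := hinner2 θ w
  -- the derivative of ψ, evaluated
  have hψ' : ∀ v : ℝ, (Polynomial.derivative (∑ i ∈ Finset.range (q + 1),
        Polynomial.C (β i / Real.sqrt (Nat.factorial i)) * Hp i)).eval v
      = ∑ i ∈ Finset.range (q+1),
          (β i / Real.sqrt (Nat.factorial i) * (i:ℝ)) * (Hp (i-1)).eval v := by
    intro v
    rw [derivative_sum, eval_finset_sum]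
    refine Finset.sum_congr rfl fun i _ => ?_
    rw [derivative_C_mul, Hp_deriv, eval_mul, eval_C, eval_mul, eval_C]
    ring
  -- basis decomposition
  have hbasis : ∀ v : EuclideanSpace ℝ (Fin d),
      ∑ j, v j • EuclideanSpace.single j (1:ℝ) = v := by
    intro v
    ext k
    rw [show ((∑ j, v j • EuclideanSpace.single j (1:ℝ)) k)
        = ∑ j, (v j • EuclideanSpace.single j (1:ℝ)) k from by rw [WithLp.ofLp_sum]; exact Finset.sum_apply k _ _]
    simp [EuclideanSpace.single_apply]
  have hphix : ∀ x : Fin d → ℝ,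
      (EuclideanSpace.equiv (Fin d) ℝ).symm x = ∑ j, x j • EuclideanSpace.single j (1:ℝ) := by
    intro x
    ext k
    rw [show ((∑ j, x j • EuclideanSpace.single j (1:ℝ)) k)
        = ∑ j, (x j • EuclideanSpace.single j (1:ℝ)) k from by rw [WithLp.ofLp_sum]; exact Finset.sum_apply k _ _]
    simp [EuclideanSpace.single_apply]
  -- continuity of integrand
  have hF : Continuous (fun x : EuclideanSpace ℝ (Fin d) =>
      ((∑ i ∈ Finset.Icc 1 M,
            (α i / Real.sqrt (Nat.factorial i)) * (Hp i).eval ⟪θ, x⟫)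
          * (Polynomial.derivative (∑ i ∈ Finset.range (q + 1),
              Polynomial.C (β i / Real.sqrt (Nat.factorial i)) * Hp i)).eval ⟪w, x⟫) • x) := by
    have hθc : Continuous (fun x : EuclideanSpace ℝ (Fin d) => ⟪θ, x⟫) :=
      Continuous.inner continuous_const continuous_id
    have hwc : Continuous (fun x : EuclideanSpace ℝ (Fin d) => ⟪w, x⟫) :=
      Continuous.inner continuous_const continuous_id
    refine Continuous.fun_smul ?_ continuous_id
    refine Continuous.fun_mul ?_ ?_
    · exact continuous_finset_sum _ fun i _ =>
        continuous_const.mul ((Hp i).continuous.comp hθc)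
    · exact (Polynomial.continuous _).comp hwc
  rw [_root_.stdGaussian, integral_map
    (((EuclideanSpace.equiv (Fin d) ℝ).symm.continuous.measurable).aemeasurable)
    hF.aestronglyMeasurable]
  simp_rw [hinner θ, hinner w, hψ', hρw]
  -- pointwise expansion into a triple sum
  have hpt : ∀ x : Fin d → ℝ,
      ((∑ i ∈ Finset.Icc 1 M,
          (α i / Real.sqrt (Nat.factorial i)) * (Hp i).eval (lclin (fun k => θ k) x))
        * (∑ i ∈ Finset.range (q+1),
          (β i / Real.sqrt (Nat.factorial i) * (i:ℝ)) * (Hp (i-1)).eval (lclin (fun k => w k) x)))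
        • ((EuclideanSpace.equiv (Fin d) ℝ).symm x)
      = ∑ j, ∑ m ∈ Finset.Icc 1 M, ∑ i ∈ Finset.range (q+1),
          (((α m / Real.sqrt (Nat.factorial m)) * (β i / Real.sqrt (Nat.factorial i) * (i:ℝ)))
            * (x j * ((Hp m).eval (lclin (fun k => θ k) x)
                * (Hp (i-1)).eval (lclin (fun k => w k) x))))
            • EuclideanSpace.single j (1:ℝ) := by
    intro x
    rw [hphix x, Finset.smul_sum]
    refine Finset.sum_congr rfl fun j _ => ?_
    rw [smul_smul]
    have hscal : ((∑ i ∈ Finset.Icc 1 M,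
          (α i / Real.sqrt (Nat.factorial i)) * (Hp i).eval (lclin (fun k => θ k) x))
        * (∑ i ∈ Finset.range (q+1),
          (β i / Real.sqrt (Nat.factorial i) * (i:ℝ)) * (Hp (i-1)).eval (lclin (fun k => w k) x)))
        * x j
        = ∑ m ∈ Finset.Icc 1 M, ∑ i ∈ Finset.range (q+1),
          (((α m / Real.sqrt (Nat.factorial m)) * (β i / Real.sqrt (Nat.factorial i) * (i:ℝ)))
            * (x j * ((Hp m).eval (lclin (fun k => θ k) x)
                * (Hp (i-1)).eval (lclin (fun k => w k) x)))) := by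
      rw [Finset.sum_mul_sum, Finset.sum_mul]
      refine Finset.sum_congr rfl fun m _ => ?_
      rw [Finset.sum_mul]
      refine Finset.sum_congr rfl fun i _ => ?_
      ring
    rw [hscal, Finset.sum_smul]
    refine Finset.sum_congr rfl fun m _ => ?_
    rw [Finset.sum_smul]
  rw [integral_congr_ae (Eventually.of_forall hpt)]
  -- integrability of each summand
  have hintc : ∀ (m i : ℕ) (j : Fin d), Integrable (fun x : Fin d → ℝ =>
      (((α m / Real.sqrt (Nat.factorial m)) * (β i / Real.sqrt (Nat.factorial i) * (i:ℝ)))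
        * (x j * ((Hp m).eval (lclin (fun k => θ k) x)
            * (Hp (i-1)).eval (lclin (fun k => w k) x))))) (Γ d) :=
    fun m i j => (integrable_coord (Hp m) (Hp (i-1)) _ _ j).const_mul _
  rw [integral_finset_sum _ (fun j _ => integrable_finset_sum _ fun m _ =>
    integrable_finset_sum _ fun i _ => (hintc m i j).smul_const _)]
  have hcomp : ∀ j : Fin d, (∫ x, (∑ m ∈ Finset.Icc 1 M, ∑ i ∈ Finset.range (q+1),
      (((α m / Real.sqrt (Nat.factorial m)) * (β i / Real.sqrt (Nat.factorial i) * (i:ℝ)))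
        * (x j * ((Hp m).eval (lclin (fun k => θ k) x)
            * (Hp (i-1)).eval (lclin (fun k => w k) x))))
        • EuclideanSpace.single j (1:ℝ)) ∂(Γ d))
      = ∑ m ∈ Finset.Icc 1 M, ∑ i ∈ Finset.range (q+1),
        (((α m / Real.sqrt (Nat.factorial m)) * (β i / Real.sqrt (Nat.factorial i) * (i:ℝ)))
          * (θ j * ((m : ℝ) * (if m - 1 = i - 1 then ((m-1)! : ℝ) * ρ ^ (m-1) else 0))
            + w j * (((i-1 : ℕ) : ℝ)
              * (if m = (i-1) - 1 then (m ! : ℝ) * ρ ^ m else 0))))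
          • EuclideanSpace.single j (1:ℝ) := by
    intro j
    rw [integral_finset_sum _ (fun m _ =>
      integrable_finset_sum _ fun i _ => (hintc m i j).smul_const _)]
    refine Finset.sum_congr rfl fun m _ => ?_
    rw [integral_finset_sum _ (fun i _ => (hintc m i j).smul_const _)]
    refine Finset.sum_congr rfl fun i _ => ?_
    rw [integral_smul_const, integral_const_mul,
      hermite_coord (fun k => θ k) (fun k => w k) haa hbb m (i-1) j]
  rw [Finset.sum_congr rfl fun j _ => hcomp j]
  clear hcomp hintc hpt hF hψ' hinner hinner2
  -- swap sums: j outermost → m, i, j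
  rw [Finset.sum_comm]
  refine Finset.sum_congr rfl fun m hm => ?_
  rw [Finset.sum_comm]
  have hm1 : 1 ≤ m := (Finset.mem_Icc.mp hm).1
  -- collapse the j-sum
  have hj : ∀ (sc A B : ℝ), (∑ j, (sc * (θ j * A + w j * B)) • EuclideanSpace.single j (1:ℝ))
      = (sc * A) • θ + (sc * B) • w := by
    intro sc A B
    have hterm : ∀ j : Fin d, (sc * (θ j * A + w j * B)) • EuclideanSpace.single j (1:ℝ)
        = (sc * A) • (θ j • EuclideanSpace.single j (1:ℝ))
          + (sc * B) • (w j • EuclideanSpace.single j (1:ℝ)) := by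
      intro j
      module
    simp_rw [hterm]
    rw [Finset.sum_add_distrib, ← Finset.smul_sum, ← Finset.smul_sum, hbasis θ, hbasis w]
  simp_rw [hj]
  rw [Finset.sum_add_distrib, ← Finset.sum_smul, ← Finset.sum_smul]
  -- the two scalar sums
  have K1 : (∑ i ∈ Finset.range (q+1),
      ((α m / Real.sqrt (Nat.factorial m)) * (β i / Real.sqrt (Nat.factorial i) * (i:ℝ)))
        * ((m : ℝ) * (if m - 1 = i - 1 then ((m-1)! : ℝ) * ρ ^ (m-1) else 0)))
      = (m : ℝ) * α m * β m * ρ ^ (m - 1) := by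
    rw [Finset.sum_range_succ']
    have hf0 : ((α m / Real.sqrt (Nat.factorial m))
        * (β 0 / Real.sqrt (Nat.factorial 0) * ((0:ℕ):ℝ)))
        * ((m : ℝ) * (if m - 1 = 0 - 1 then ((m-1)! : ℝ) * ρ ^ (m-1) else 0)) = 0 := by
      simp
    rw [hf0, add_zero]
    have hterm : ∀ n : ℕ, ((α m / Real.sqrt (Nat.factorial m))
        * (β (n+1) / Real.sqrt (Nat.factorial (n+1)) * ((n+1:ℕ):ℝ)))
        * ((m : ℝ) * (if m - 1 = (n+1) - 1 then ((m-1)! : ℝ) * ρ ^ (m-1) else 0))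
        = if m - 1 = n then ((α m / Real.sqrt (Nat.factorial m))
            * (β (n+1) / Real.sqrt (Nat.factorial (n+1)) * ((n+1:ℕ):ℝ)))
            * ((m : ℝ) * (((m-1)! : ℝ) * ρ ^ (m-1))) else 0 := by
      intro n
      have h1 : (n+1) - 1 = n := rfl
      rw [h1]
      by_cases h : m - 1 = n
      · rw [if_pos h, if_pos h]
      · rw [if_neg h, if_neg h, mul_zero, mul_zero]
    simp_rw [hterm]
    rw [Finset.sum_ite_eq]
    by_cases hq : m - 1 ∈ Finset.range q
    · rw [if_pos hq]
      have hm2 : m - 1 + 1 = m := Nat.succ_pred_eq_of_pos hm1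
      rw [hm2]
      have hsq : Real.sqrt (m ! : ℝ) * Real.sqrt (m ! : ℝ) = (m ! : ℝ) :=
        Real.mul_self_sqrt (by positivity)
      have hne : Real.sqrt (m ! : ℝ) ≠ 0 :=
        ne_of_gt (Real.sqrt_pos.mpr (by exact_mod_cast Nat.factorial_pos m))
      have h1 : ((m:ℝ)) * ((m-1)! : ℝ) = (m ! : ℝ) := by
        rw_mod_cast [Nat.mul_factorial_pred (by omega)]
      field_simp
      linear_combination (α m * β m * ρ^(m-1)) * h1
        - (α m * β m * ρ^(m-1)) * hsq
    · rw [if_neg hq]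
      have : q < m := by
        simp only [Finset.mem_range] at hq
        omega
      rw [hβ m this]
      ring
  have K2 : (∑ i ∈ Finset.range (q+1),
      ((α m / Real.sqrt (Nat.factorial m)) * (β i / Real.sqrt (Nat.factorial i) * (i:ℝ)))
        * (((i-1 : ℕ) : ℝ) * (if m = (i-1) - 1 then (m ! : ℝ) * ρ ^ m else 0)))
      = Real.sqrt (((m : ℝ) + 1) * ((m : ℝ) + 2)) * α m * β (m + 2) * ρ ^ m := by
    rw [Finset.sum_range_succ']
    have hf0 : ((α m / Real.sqrt (Nat.factorial m))
        * (β 0 / Real.sqrt (Nat.factorial 0) * ((0:ℕ):ℝ)))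
        * (((0-1 : ℕ) : ℝ) * (if m = (0-1) - 1 then (m ! : ℝ) * ρ ^ m else 0)) = 0 := by
      simp
    rw [hf0, add_zero]
    have hterm : ∀ n : ℕ, ((α m / Real.sqrt (Nat.factorial m))
        * (β (n+1) / Real.sqrt (Nat.factorial (n+1)) * ((n+1:ℕ):ℝ)))
        * ((((n+1)-1 : ℕ) : ℝ) * (if m = ((n+1)-1) - 1 then (m ! : ℝ) * ρ ^ m else 0))
        = if m + 1 = n then ((α m / Real.sqrt (Nat.factorial m))
            * (β (n+1) / Real.sqrt (Nat.factorial (n+1)) * ((n+1:ℕ):ℝ)))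
            * (((n : ℕ) : ℝ) * ((m ! : ℝ) * ρ ^ m)) else 0 := by
      intro n
      have h1 : (n+1) - 1 = n := rfl
      rw [h1]
      match n with
      | 0 =>
          rw [if_neg (show ¬ (m + 1 = 0) by omega), Nat.cast_zero, zero_mul, mul_zero]
      | (k+1) =>
          by_cases h : m = (k+1) - 1
          · rw [if_pos h, if_pos (by omega)]
          · rw [if_neg h, if_neg (by omega), mul_zero, mul_zero]
    simp_rw [hterm]
    rw [Finset.sum_ite_eq]
    by_cases hq : m + 1 ∈ Finset.range q
    · rw [if_pos hq]
      have h2 : ((m+1+1 : ℕ) : ℝ) = (m:ℝ) + 2 := by push_cast; ring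
      have h3 : ((m+1 : ℕ) : ℝ) = (m:ℝ) + 1 := by push_cast; ring
      rw [h2, h3]
      have hfs : ((m+1+1)! : ℝ) = (m ! : ℝ) * (((m:ℝ)+1) * ((m:ℝ)+2)) := by
        rw [Nat.factorial_succ, Nat.factorial_succ]
        push_cast
        ring
      have hs2 : Real.sqrt ((m+1+1)! : ℝ)
          = Real.sqrt (m ! : ℝ) * Real.sqrt (((m:ℝ)+1) * ((m:ℝ)+2)) := by
        rw [hfs, Real.sqrt_mul (by positivity)]
      have hsq1 : Real.sqrt (m ! : ℝ) * Real.sqrt (m ! : ℝ) = (m ! : ℝ) :=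
        Real.mul_self_sqrt (by positivity)
      have hsq2 : Real.sqrt (((m:ℝ)+1) * ((m:ℝ)+2)) * Real.sqrt (((m:ℝ)+1) * ((m:ℝ)+2))
          = ((m:ℝ)+1) * ((m:ℝ)+2) := Real.mul_self_sqrt (by positivity)
      have hne1 : Real.sqrt (m ! : ℝ) ≠ 0 :=
        ne_of_gt (Real.sqrt_pos.mpr (by exact_mod_cast Nat.factorial_pos m))
      have hne2 : Real.sqrt (((m:ℝ)+1) * ((m:ℝ)+2)) ≠ 0 :=
        ne_of_gt (Real.sqrt_pos.mpr (by positivity))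
      rw [hs2]
      set s2 := Real.sqrt (((m:ℝ)+1) * ((m:ℝ)+2)) with hs2def
      field_simp
      linear_combination (-(α m * β (m+2) * ρ^m) * (s2 * s2)) * hsq1
        + (-(α m * β (m+2) * ρ^m) * (m ! : ℝ)) * hsq2
    · rw [if_neg hq]
      have : q < m + 2 := by
        simp only [Finset.mem_range] at hq
        omega
      rw [hβ (m+2) this]
      ring
  rw [K1, K2]



end MainThm
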